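/- Let f : ℕ^n → P be an antitone map to a poset P such that every chain in the image stabilizes (i.e., the image satisfies the descending chain condition along strictly increasing sequences in ℕ^n). Then the image of f is finite. -/

import Mathlib

theorem antitone_dcc_finite_range {n : ℕ} {P : Type*} [PartialOrder P]
    (f : (Fin n → ℕ) → P) (hf : Antitone f)
    (hchain : ∀ a : ℕ → (Fin n → ℕ), StrictMono a →
      ∃ N : ℕ, ∀ k ≥ N, f (a k) = f (a N)) :
    (Set.range f).Finite := by
  by_contra hinf
  rw [← Set.not_infinite, not_not] at hinf
  let e := hinf.natEmbedding
  -- choose preimages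
  have hpre : ∀ k : ℕ, ∃ a, f a = (e k : P) := fun k => (e k).2
  choose a ha using hpre
  have hdist : ∀ i j : ℕ, f (a i) = f (a j) → i = j := by
    intro i j hij
    apply e.injective
    ext
    rw [← ha i, ← ha j, hij]
  obtain ⟨g, hg⟩ := (Set.IsPWO.pi (s := fun _ : Fin n => (Set.univ : Set ℕ)) (fun _ => (Set.IsWF.of_wellFoundedLT _).isPWO)).exists_monotone_subseq (f := a)
    (fun _ => Set.mem_univ_pi.mpr fun _ => Set.mem_univ _)
  have hsm : StrictMono (a ∘ g) := by
    intro i j hij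
    refine lt_of_le_of_ne (hg hij.le) ?_
    intro heq
    exact absurd (hdist _ _ (congrArg f heq)) (g.injective.ne (ne_of_lt hij).symm ∘ Eq.symm)
  obtain ⟨N, hN⟩ := hchain (a ∘ g) hsm
  have := hdist (g (N + 1)) (g N) (hN (N + 1) (Nat.le_succ N))
  exact absurd (g.injective this) (Nat.succ_ne_self N)
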